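/- Let (G, Σ, χ, w) be a Decoder Retrieval instance and let {a,b} be a one-sided letter pair. Then every solution D for the instance contains exactly one of the two pairs (a,b) and (b,a), i.e., |D ∩ {(a,b),(b,a)}| = 1. -/

import Mathlib

/-- The letter graph `G(D, w)` on vertex set `Fin w.length`: positions `i < j`
are adjacent iff the ordered pair of letters `(w_i, w_j)` lies in the decoder `D`. -/
def letterGraph {A : Type*} (D : Set (A × A)) (w : List A) : SimpleGraph (Fin w.length) where
  Adj i j := (i < j ∧ (w.get i, w.get j) ∈ D) ∨ (j < i ∧ (w.get j, w.get i) ∈ D)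
  symm := by constructor; intro i j h; exact h.symm
  loopless := by constructor; intro i h; rcases h with ⟨h, -⟩ | ⟨h, -⟩ <;> exact lt_irrefl _ h

/-- `D` is a solution for the decoder-retrieval data `(G, χ, w)`: there is a graph
isomorphism from `G` to the letter graph `G(D, w)` that respects the coloring `χ`. -/
def IsSolution {V A : Type*} (G : SimpleGraph V) (χ : V → A) (w : List A)
    (D : Set (A × A)) : Prop :=
  ∃ f : G ≃g letterGraph D w, ∀ v : V, χ v = w.get (f v)

/-- The color class `V_a` as a finset. -/
def classFinset {V A : Type*} [Fintype V] [DecidableEq A] (χ : V → A) (a : A) : Finset V :=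
  Finset.univ.filter fun v => χ v = a

/-- The number of edges of `G` between `V_a` and `V_b` (for `a ≠ b`),
counted as ordered pairs `(u, v)` with `u ∈ V_a`, `v ∈ V_b`, `u ~ v`. -/
def crossCard {V A : Type*} [Fintype V] [DecidableEq A] (G : SimpleGraph V)
    [DecidableRel G.Adj] (χ : V → A) (a b : A) : ℕ :=
  ((classFinset χ a ×ˢ classFinset χ b).filter fun p => G.Adj p.1 p.2).card

/-- The letter pair `{a, b}` is one-sided: `a ≠ b` and `0 < |E(V_a, V_b)| < |V_a| · |V_b|`. -/
def OneSided {V A : Type*} [Fintype V] [DecidableEq A] (G : SimpleGraph V)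
    [DecidableRel G.Adj] (χ : V → A) (a b : A) : Prop :=
  a ≠ b ∧ 0 < crossCard G χ a b ∧
    crossCard G χ a b < (classFinset χ a).card * (classFinset χ b).card

/-- If `{a, b}` is a one-sided letter pair, then every solution `D` of the
Decoder Retrieval instance contains exactly one of the pairs `(a, b)` and `(b, a)`. -/
theorem solution_contains_exactly_one_of_oneSided {V A : Type*} [Fintype V] [Fintype A] [DecidableEq A]
    (G : SimpleGraph V) [DecidableRel G.Adj] (χ : V → A) (w : List A)
    (hcls : ∀ b : A, ∃ v : V, χ v = b)
    (hlen : w.length = Fintype.card V)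
    (hcount : ∀ b : A, w.count b = (Finset.univ.filter fun v => χ v = b).card)
    (a b : A) (hos : OneSided G χ a b)
    (D : Set (A × A)) (hD : IsSolution G χ w D) :
    ((a, b) ∈ D ∧ (b, a) ∉ D) ∨ ((b, a) ∈ D ∧ (a, b) ∉ D) := by
  obtain ⟨f, hf⟩ := hD
  obtain ⟨hab, hpos, hlt⟩ := hos
  have key : ∀ u v : V, χ u = a → χ v = b →
      (G.Adj u v ↔ ((f u < f v ∧ (a,b) ∈ D) ∨ (f v < f u ∧ (b,a) ∈ D))) := by
    intro u v hu hv
    have h1 : w.get (f u) = a := by rw [← hf u, hu]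
    have h2 : w.get (f v) = b := by rw [← hf v, hv]
    rw [← f.map_adj_iff]
    rw [List.get_eq_getElem] at h1 h2
    change ((f u < f v ∧ (w.get (f u), w.get (f v)) ∈ D) ∨ (f v < f u ∧ (w.get (f v), w.get (f u)) ∈ D)) ↔ _
    simp only [List.get_eq_getElem, h1, h2]
  by_cases h1 : (a,b) ∈ D <;> by_cases h2 : (b,a) ∈ D
  · exfalso
    have hcc : crossCard G χ a b = (classFinset χ a).card * (classFinset χ b).card := by
      unfold crossCard
      rw [Finset.filter_true_of_mem, Finset.card_product]
      intro p hp
      simp only [Finset.mem_product, classFinset, Finset.mem_filter] at hp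
      have hpne : p.1 ≠ p.2 := fun he => hab (by rw [← hp.1.2, ← hp.2.2, he])
      have hne : f p.1 ≠ f p.2 := fun he => hpne (f.toEquiv.injective he)
      rcases lt_or_gt_of_ne hne with h | h
      · exact (key p.1 p.2 hp.1.2 hp.2.2).mpr (Or.inl ⟨h, h1⟩)
      · exact (key p.1 p.2 hp.1.2 hp.2.2).mpr (Or.inr ⟨h, h2⟩)
    omega
  · exact Or.inl ⟨h1, h2⟩
  · exact Or.inr ⟨h2, h1⟩
  · exfalso
    have hcc : crossCard G χ a b = 0 := by
      unfold crossCard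
      rw [Finset.card_eq_zero, Finset.filter_eq_empty_iff]
      intro p hp
      simp only [Finset.mem_product, classFinset, Finset.mem_filter] at hp
      intro hadj
      rcases (key p.1 p.2 hp.1.2 hp.2.2).mp hadj with ⟨-, h⟩ | ⟨-, h⟩
      exacts [h1 h, h2 h]
    omega
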